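/- For any n ≥ 1, the (q_n − 1)-th conjugate of s_n equals w_{n-1} v_{n-2} and the (q_{n-1} − 1)-th conjugate of s_n equals v_{n-2} w_{n-1}, where C_k(x_1 x_2 ⋯ x_m) = x_{k+1} ⋯ x_m x_1 ⋯ x_k. -/

import Mathlib

/-- Letters: `a` is `false`, `b` is `true`. -/
abbrev Word := List Bool

/-- `wpow w k` is the `k`-fold concatenation `w^k`. -/
def wpow (w : Word) (k : ℕ) : Word := (List.replicate k w).flatten

/-- The `k`-th conjugate of a word. -/
def conj (k : ℕ) (u : Word) : Word := u.drop k ++ u.take k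

lemma wpow_succ (u : Word) (k : ℕ) : wpow u (k+1) = u ++ wpow u k := by
  simp [wpow, List.replicate_succ]

lemma wpow_length (u : Word) (k : ℕ) : (wpow u k).length = k * u.length := by
  induction k with
  | zero => simp [wpow]
  | succ k ih => rw [wpow_succ, List.length_append, ih]; ring

lemma drop_pred {l : Word} {x : Bool} (h : l.getLast? = some x) :
    l.drop (l.length - 1) = [x] := by
  conv_lhs => rw [← List.dropLast_append_getLast? _ h]
  rw [List.drop_append]
  simp [List.length_dropLast]

lemma take_pred (l : Word) : l.take (l.length - 1) = l.dropLast :=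
  (List.dropLast_eq_take (l := l)).symm

lemma dropLast_append' {u v : Word} (hv : v ≠ []) : (u ++ v).dropLast = u ++ v.dropLast := by
  rw [List.dropLast_append]
  simp [hv]

lemma if_odd_eq (m : ℤ) : (if Odd m then ([false] : Word) else [true]) = [!decide (Odd m)] := by
  by_cases h : Odd m <;> simp [h]

/-- For any `n ≥ 1`, `C_{qₙ - 1}(sₙ) = wₙ₋₁ vₙ₋₂` and `C_{qₙ₋₁ - 1}(sₙ) = vₙ₋₂ wₙ₋₁`. -/
theorem conjugates_of_standard_word (d : ℤ → ℕ) (s : ℤ → Word)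
    (hd : ∀ n : ℤ, 1 ≤ n → 1 ≤ d n)
    (hs1 : s (-1) = [true]) (hs0 : s 0 = [false])
    (hs : ∀ n : ℤ, 1 ≤ n → s n = wpow (s (n - 1)) (d n) ++ s (n - 2))
    (w : ℤ → Word)
    (hw : ∀ n : ℤ, 0 ≤ n → w n = (if Odd n then [false] else [true]) ++ (s n).dropLast)
    (hwm1 : w (-1) = [false]) (hwm2 : w (-2) = [])
    (v : ℤ → Word)
    (hv : ∀ n : ℤ, -1 ≤ n → v n = (if Odd n then [false] else [true]) ++ (wpow (s (n + 1)) (d (n + 2) - 1) ++ s n).dropLast)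
    (hvm2 : v (-2) = [])
    (q : ℤ → ℕ) (hq1 : q (-1) = 1) (hq0 : q 0 = 1)
    (hq : ∀ n : ℤ, 1 ≤ n → q n = d n * q (n - 1) + q (n - 2)) :
    ∀ n : ℤ, 1 ≤ n →
      conj (q n - 1) (s n) = w (n - 1) ++ v (n - 2) ∧
      conj (q (n - 1) - 1) (s n) = v (n - 2) ++ w (n - 1) := by
  have key : ∀ k : ℕ,
      ((s ((k:ℤ) - 1)).getLast? = some (decide (Odd ((k:ℤ) - 1))) ∧
        (s ((k:ℤ) - 1)).length = q ((k:ℤ) - 1)) ∧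
      ((s (k:ℤ)).getLast? = some (decide (Odd (k:ℤ))) ∧
        (s (k:ℤ)).length = q (k:ℤ)) := by
    intro k
    induction k with
    | zero =>
      simp only [Nat.cast_zero, zero_sub]
      rw [hs1, hs0, hq1, hq0]
      refine ⟨⟨?_, rfl⟩, ⟨?_, rfl⟩⟩
      · simp [Int.odd_iff]
      · simp [Int.odd_iff]
    | succ k ih =>
      have e1 : ((k:ℤ) + 1) - 1 = (k:ℤ) := by ring
      have e2 : ((k:ℤ) + 1) - 2 = (k:ℤ) - 1 := by ring
      have ek : ((k + 1 : ℕ) : ℤ) = (k:ℤ) + 1 := by push_cast; ring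
      rw [ek, e1]
      refine ⟨ih.2, ?_⟩
      have h1 : (1:ℤ) ≤ (k:ℤ) + 1 := by omega
      have hrec := hs _ h1
      rw [e1, e2] at hrec
      constructor
      · rw [hrec, List.getLast?_append, ih.1.1]
        show some _ = some _
        congr 1
        apply decide_eq_decide.mpr
        simp only [Int.odd_iff]
        omega
      · rw [hrec, List.length_append, wpow_length, ih.2.2, ih.1.2, hq _ h1, e1, e2]
  have P : ∀ m : ℤ, -1 ≤ m →
      (s m).getLast? = some (decide (Odd m)) ∧ (s m).length = q m := by
    intro m hm
    have h := (key (m + 1).toNat).1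
    have e : ((m + 1).toNat : ℤ) - 1 = m := by omega
    rwa [e] at h
  intro n hn
  obtain ⟨g1, len1⟩ := P (n - 1) (by omega)
  obtain ⟨g2, len2⟩ := P (n - 2) (by omega)
  obtain ⟨g0, len0⟩ := P n (by omega)
  have hdn := hd n hn
  set rest : Word := wpow (s (n - 1)) (d n - 1) ++ s (n - 2) with hrest
  have hsn : s n = s (n - 1) ++ rest := by
    rw [hs n hn, hrest, ← List.append_assoc]
    congr 1
    conv_lhs => rw [show d n = (d n - 1) + 1 by omega, wpow_succ]
  have grest : rest.getLast? = some (decide (Odd (n - 2))) := by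
    rw [hrest, List.getLast?_append, g2]
    rfl
  have hrne : rest ≠ [] := by
    intro h; rw [h] at grest; simp at grest
  have par1 : decide (Odd (n - 1)) = !decide (Odd n) := by
    rw [← decide_not]
    apply decide_eq_decide.mpr
    simp only [Int.odd_iff]
    omega
  have par2 : decide (Odd (n - 2)) = decide (Odd n) := by
    apply decide_eq_decide.mpr
    simp only [Int.odd_iff]
    omega
  -- rewrite w (n-1) and v (n-2)
  have hwn : w (n - 1) = [decide (Odd n)] ++ (s (n - 1)).dropLast := by
    rw [hw (n - 1) (by omega), if_odd_eq, par1, Bool.not_not]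
  have hvn : v (n - 2) = [!decide (Odd n)] ++ rest.dropLast := by
    rw [hv (n - 2) (by omega), if_odd_eq, par2,
      show n - 2 + 1 = n - 1 by ring, show n - 2 + 2 = n by ring, hrest]
  -- s (n-1) = dropLast ++ [!L]
  have hsplit1 : (s (n - 1)).dropLast ++ [!decide (Odd n)] = s (n - 1) := by
    rw [← par1]; exact List.dropLast_append_getLast? _ g1
  have hsplit2 : rest.dropLast ++ [decide (Odd n)] = rest := by
    rw [← par2]; exact List.dropLast_append_getLast? _ grest
  constructor
  · -- first conjugate
    have hqlen : q n - 1 = (s n).length - 1 := by rw [len0]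
    rw [conj, hqlen, drop_pred g0, take_pred, hwn, hvn, hsn,
      dropLast_append' hrne]
    simp only [← List.append_assoc]
    congr 1
    rw [List.append_assoc, hsplit1]
  · -- second conjugate
    have hqlen : q (n - 1) - 1 = (s (n - 1)).length - 1 := by rw [len1]
    rw [conj, hqlen, hsn, List.drop_append, List.take_append,
      drop_pred g1, take_pred, par1]
    have hz : (s (n - 1)).length - 1 - (s (n - 1)).length = 0 := by omega
    rw [hz, List.drop_zero, List.take_zero, List.append_nil, hwn, hvn]
    simp only [← List.append_assoc]
    congr 1
    rw [List.append_assoc, hsplit2, hrest]
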